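/- For all n ≥ 1, the number of non-crossing permutations of {1,1,...,n,n} avoiding both the pattern 122 and the pattern 312 equals n. -/

import Mathlib

/-- A permutation of the multiset {1,1,2,2,...,n,n}, encoded as a function
`Fin (2*n) → Fin n` where the value `v : Fin n` represents `v+1`:
every value appears exactly twice. -/
def IsMultisetPerm {n : ℕ} (π : Fin (2*n) → Fin n) : Prop :=
  ∀ v : Fin n, (Finset.univ.filter fun i => π i = v).card = 2

/-- Non-nesting: no indices i<j<k<l with π_i=π_l, π_j=π_k, π_i≠π_j. -/
def NonNesting {n : ℕ} (π : Fin (2*n) → Fin n) : Prop :=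
  ¬ ∃ i j k l : Fin (2*n), i < j ∧ j < k ∧ k < l ∧
      π i = π l ∧ π j = π k ∧ π i ≠ π j

/-- Non-crossing: no indices i<j<k<l with π_i=π_k, π_j=π_l, π_i≠π_j. -/
def NonCrossing {n : ℕ} (π : Fin (2*n) → Fin n) : Prop :=
  ¬ ∃ i j k l : Fin (2*n), i < j ∧ j < k ∧ k < l ∧
      π i = π k ∧ π j = π l ∧ π i ≠ π j

/-- Avoiding the pattern 231: no i<j<k with π_k < π_i < π_j. -/
def Avoids231 {n : ℕ} (π : Fin (2*n) → Fin n) : Prop :=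
  ¬ ∃ i j k : Fin (2*n), i < j ∧ j < k ∧ π k < π i ∧ π i < π j

/-- Avoiding 122: no i<j<k with π_i < π_j = π_k. -/
def Avoids122 {n : ℕ} (π : Fin (2*n) → Fin n) : Prop :=
  ¬ ∃ i j k : Fin (2*n), i < j ∧ j < k ∧ π i < π j ∧ π j = π k

/-- The first entry is the value 1 (encoded as `0 : Fin n`). -/
def FirstIsOne {n : ℕ} (π : Fin (2*n) → Fin n) : Prop :=
  ∃ h : 0 < n, π ⟨0, by omega⟩ = ⟨0, h⟩

/-- The last entry is the value n (encoded as `n-1 : Fin n`). -/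
def LastIsMax {n : ℕ} (π : Fin (2*n) → Fin n) : Prop :=
  ∃ h : 0 < n, π ⟨2*n - 1, by omega⟩ = ⟨n - 1, by omega⟩

/-- Avoiding 312: no i<j<k with π_j < π_k < π_i. -/
def Avoids312 {n : ℕ} (π : Fin (2*n) → Fin n) : Prop :=
  ¬ ∃ i j k : Fin (2*n), i < j ∧ j < k ∧ π j < π k ∧ π k < π i


def pval (n t i : ℕ) : ℕ :=
  if i = 2*t+1 then n-1 else if i < 2*t+1 then n-1-((i+1)/2) else n-1-(i/2)

lemma pval_lt {n t i : ℕ} (hn : 0 < n) : pval n t i < n := by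
  unfold pval; split_ifs <;> omega

def perm (n : ℕ) (hn : 0 < n) (t : ℕ) : Fin (2*n) → Fin n :=
  fun i => ⟨pval n t i.val, pval_lt hn⟩

lemma perm_H1 {n : ℕ} (hn : 0 < n) {t : ℕ} (ht : t < n) (i : Fin (2*n)) :
    (perm n hn t i).val = n-1 ↔ (i.val = 0 ∨ i.val = 2*t+1) := by
  have hi := i.isLt
  simp only [perm, pval]
  split_ifs <;> omega

lemma perm_H2 {n : ℕ} (hn : 0 < n) {t : ℕ} (ht : t < n) (i j : Fin (2*n))
    (hij : i.val < j.val) (hj : (perm n hn t j).val ≠ n-1) :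
    (perm n hn t j).val ≤ (perm n hn t i).val := by
  have hi := i.isLt; have hj2 := j.isLt
  simp only [perm, pval] at *
  split_ifs at * <;> omega

lemma perm_H3 {n : ℕ} (hn : 0 < n) {t : ℕ} (ht : t < n) (i j : Fin (2*n))
    (hij : i.val < j.val) (he : perm n hn t i = perm n hn t j)
    (hi : (perm n hn t i).val ≠ n-1) : j.val = i.val + 1 := by
  have hi2 := i.isLt; have hj2 := j.isLt
  rw [Fin.ext_iff] at he
  simp only [perm, pval] at *
  split_ifs at * <;> omega
lemma card_pair {n : ℕ} {π : Fin (2*n) → Fin n} {v : Fin n} (a b : ℕ)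
    (ha : a < 2*n) (hb : b < 2*n) (hab : a ≠ b)
    (key : ∀ i : Fin (2*n), π i = v ↔ (i.val = a ∨ i.val = b)) :
    (Finset.univ.filter fun i => π i = v).card = 2 := by
  have : (Finset.univ.filter fun i => π i = v) = {(⟨a, ha⟩ : Fin (2*n)), ⟨b, hb⟩} := by
    ext i
    rw [Finset.mem_filter]
    simp only [Finset.mem_univ, true_and, key i, Finset.mem_insert,
      Finset.mem_singleton, Fin.ext_iff]
  rw [this, Finset.card_insert_of_notMem (by simp [Fin.ext_iff, hab]),
    Finset.card_singleton]

lemma perm_mult {n : ℕ} (hn : 0 < n) {t : ℕ} (ht : t < n) :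
    ∀ v : Fin n, (Finset.univ.filter fun i => perm n hn t i = v).card = 2 := by
  intro v
  have hv := v.isLt
  by_cases h1 : v.val = n-1
  · refine card_pair 0 (2*t+1) (by omega) (by omega) (by omega) ?_
    intro i
    have hi := i.isLt
    rw [Fin.ext_iff]
    simp only [perm, pval]
    split_ifs <;> omega
  · by_cases h2 : n-1-v.val ≤ t
    · refine card_pair (2*(n-1-v.val)-1) (2*(n-1-v.val)) (by omega) (by omega) (by omega) ?_
      intro i
      have hi := i.isLt
      rw [Fin.ext_iff]
      simp only [perm, pval]
      split_ifs <;> omega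
    · refine card_pair (2*(n-1-v.val)) (2*(n-1-v.val)+1) (by omega) (by omega) (by omega) ?_
      intro i
      have hi := i.isLt
      rw [Fin.ext_iff]
      simp only [perm, pval]
      split_ifs <;> omega


section generic
variable {n : ℕ} {π : Fin (2*n) → Fin n} {p : ℕ}

lemma a312_of
    (H2 : ∀ i j : Fin (2*n), i.val < j.val → (π j).val ≠ n-1 → (π j).val ≤ (π i).val) :
    Avoids312 π := by
  rintro ⟨i, j, k, hij, hjk, h1, h2⟩
  rw [Fin.lt_def] at h1 h2 hij hjk
  have hk : (π k).val ≠ n-1 := by have := (π i).isLt; omega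
  have := H2 j k hjk hk
  omega

lemma a122_of
    (H1 : ∀ i : Fin (2*n), (π i).val = n-1 ↔ (i.val = 0 ∨ i.val = p))
    (H2 : ∀ i j : Fin (2*n), i.val < j.val → (π j).val ≠ n-1 → (π j).val ≤ (π i).val) :
    Avoids122 π := by
  rintro ⟨i, j, k, hij, hjk, h1, h2⟩
  rw [Fin.lt_def] at h1 hij hjk
  by_cases hj : (π j).val = n-1
  · have hk : (π k).val = n-1 := by rw [← h2]; exact hj
    have e1 := (H1 j).mp hj
    have e2 := (H1 k).mp hk
    omega
  · have := H2 i j hij hj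
    omega

lemma nc_of
    (H1 : ∀ i : Fin (2*n), (π i).val = n-1 ↔ (i.val = 0 ∨ i.val = p))
    (H3 : ∀ i j : Fin (2*n), i.val < j.val → π i = π j → (π i).val ≠ n-1 →
      j.val = i.val + 1) :
    NonCrossing π := by
  rintro ⟨i, j, k, l, hij, hjk, hkl, h1, h2, h3⟩
  rw [Fin.lt_def] at hij hjk hkl
  by_cases hi : (π i).val = n-1
  · -- then i=0, k=p, and j,l non-top pair with j < k < l
    have hj : (π j).val ≠ n-1 := by
      intro hj
      have hl : (π l).val = n-1 := by rw [← h2]; exact hj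
      have e1 := (H1 j).mp hj
      have e2 := (H1 l).mp hl
      omega
    have := H3 j l (by omega) h2 hj
    have hk : (π k).val = n-1 := by rw [← h1]; exact hi
    have e1 := (H1 i).mp hi
    have e2 := (H1 k).mp hk
    omega
  · have := H3 i k (by omega) h1 hi
    omega
end generic


lemma cardT {n : ℕ} {π : Fin (2*n) → Fin n} (hM : IsMultisetPerm π) (v : Fin n) :
    (Finset.univ.filter fun j => v ≤ π j).card = 2 * (n - v.val) := by
  have heq : (Finset.univ.filter fun j => v ≤ π j)
      = (Finset.Ici v).biUnion (fun w => Finset.univ.filter fun j => π j = w) := by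
    ext j
    simp only [Finset.mem_filter, Finset.mem_univ, true_and, Finset.mem_biUnion,
      Finset.mem_Ici]
    constructor
    · intro h; exact ⟨π j, h, rfl⟩
    · rintro ⟨w, hw, h⟩; rw [h]; exact hw
  rw [heq, Finset.card_biUnion]
  · rw [Finset.sum_congr rfl (fun w _ => hM w), Finset.sum_const, Fin.card_Ici,
      smul_eq_mul]
    omega
  · intro x _ y _ hxy
    simp [Finset.disjoint_left]
    intro a ha hb
    exact hxy (ha ▸ hb ▸ rfl)

lemma unique_struct {n : ℕ} {π σ : Fin (2*n) → Fin n} {p : ℕ}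
    (hMπ : IsMultisetPerm π) (hMσ : IsMultisetPerm σ)
    (H1π : ∀ i : Fin (2*n), (π i).val = n-1 ↔ (i.val = 0 ∨ i.val = p))
    (H1σ : ∀ i : Fin (2*n), (σ i).val = n-1 ↔ (i.val = 0 ∨ i.val = p))
    (H2π : ∀ i j : Fin (2*n), i.val < j.val → (π j).val ≠ n-1 → (π j).val ≤ (π i).val)
    (H2σ : ∀ i j : Fin (2*n), i.val < j.val → (σ j).val ≠ n-1 → (σ j).val ≤ (σ i).val) :
    π = σ := by
  have key : ∀ v : Fin n,
      (Finset.univ.filter fun j => v ≤ π j) = (Finset.univ.filter fun j => v ≤ σ j) := by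
    intro v
    have hv := v.isLt
    have hcard : (Finset.univ.filter fun j => v ≤ π j).card
        = (Finset.univ.filter fun j => v ≤ σ j).card := by
      rw [cardT hMπ, cardT hMσ]
    have hsub : (Finset.univ.filter fun j => v ≤ π j) ⊆ (Finset.univ.filter fun j => v ≤ σ j)
        ∨ (Finset.univ.filter fun j => v ≤ σ j) ⊆ (Finset.univ.filter fun j => v ≤ π j) := by
      by_contra hc
      push_neg at hc
      obtain ⟨h1, h2⟩ := hc
      rw [Finset.not_subset] at h1 h2
      obtain ⟨a, ha1, ha2⟩ := h1
      obtain ⟨b, hb1, hb2⟩ := h2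
      simp only [Finset.mem_filter, Finset.mem_univ, true_and] at ha1 ha2 hb1 hb2
      rw [Fin.le_def, not_le] at ha2 hb2
      rw [Fin.le_def] at ha1 hb1
      -- σ a < v ≤ n-1, so σ a not top, so a ∉ {0,p}
      have hsa : (σ a).val ≠ n-1 := by omega
      have hpb : (π b).val ≠ n-1 := by omega
      have hanp := (not_iff_not.mpr (H1σ a)).mp hsa
      have hbnp := (not_iff_not.mpr (H1π b)).mp hpb
      push_neg at hanp hbnp
      have hsb : (σ b).val ≠ n-1 := (not_iff_not.mpr (H1σ b)).mpr (by push_neg; exact hbnp)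
      have hpa : (π a).val ≠ n-1 := (not_iff_not.mpr (H1π a)).mpr (by push_neg; exact hanp)
      rcases lt_trichotomy a.val b.val with h | h | h
      · have := H2σ a b h hsb
        omega
      · have : a = b := Fin.ext h
        subst this; omega
      · have := H2π b a h hpa
        omega
    rcases hsub with h | h
    · exact Finset.eq_of_subset_of_card_le h (le_of_eq hcard.symm)
    · exact (Finset.eq_of_subset_of_card_le h (le_of_eq hcard)).symm
  funext i
  have h1 : π i ≤ σ i := by
    have : i ∈ Finset.univ.filter fun j => (π i) ≤ π j := by simp
    rw [key (π i)] at this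
    simpa using this
  have h2 : σ i ≤ π i := by
    have : i ∈ Finset.univ.filter fun j => (σ i) ≤ σ j := by simp
    rw [← key (σ i)] at this
    simpa using this
  exact le_antisymm h1 h2


lemma structure_of {n : ℕ} (hn : 0 < n) {π : Fin (2*n) → Fin n}
    (hM : IsMultisetPerm π) (hNC : NonCrossing π) (h122 : Avoids122 π)
    (h312 : Avoids312 π) :
    ∃ p : Fin (2*n), 0 < p.val ∧
      (∀ i : Fin (2*n), (π i).val = n-1 ↔ (i.val = 0 ∨ i.val = p.val)) ∧
      (∀ i j : Fin (2*n), i.val < j.val → (π j).val ≠ n-1 → (π j).val ≤ (π i).val) := by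
  have htop : ∀ i : Fin (2*n), π i = ⟨n-1, by omega⟩ ↔ (π i).val = n-1 := by
    intro i; rw [Fin.ext_iff]
  obtain ⟨a, b, hab, hfib⟩ := Finset.card_eq_two.mp (hM ⟨n-1, by omega⟩)
  have hmem : ∀ i : Fin (2*n), (π i).val = n-1 ↔ (i = a ∨ i = b) := by
    intro i
    rw [← htop i]
    have : i ∈ Finset.univ.filter (fun i => π i = (⟨n-1, by omega⟩ : Fin n))
        ↔ i ∈ ({a, b} : Finset _) := by rw [hfib]
    simpa using this
  have hπa : (π a).val = n-1 := (hmem a).mpr (Or.inl rfl)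
  have hπb : (π b).val = n-1 := (hmem b).mpr (Or.inr rfl)
  set z : Fin (2*n) := ⟨0, by omega⟩ with hzdef
  have hzv : z.val = 0 := rfl
  -- π z = top
  have hz0 : (π z).val = n-1 := by
    by_contra hc
    have hπz := (π z).isLt
    have hav : a.val ≠ 0 := by
      intro h
      have : a = z := Fin.ext (by omega)
      rw [this] at hπa; exact hc hπa
    have hbv : b.val ≠ 0 := by
      intro h
      have : b = z := Fin.ext (by omega)
      rw [this] at hπb; exact hc hπb
    rcases hab.lt_or_gt with h | h
    · refine h122 ⟨z, a, b, ?_, h, ?_, ?_⟩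
      · rw [Fin.lt_def]; omega
      · rw [Fin.lt_def]; omega
      · rw [Fin.ext_iff]; omega
    · refine h122 ⟨z, b, a, ?_, h, ?_, ?_⟩
      · rw [Fin.lt_def]; omega
      · rw [Fin.lt_def]; omega
      · rw [Fin.ext_iff]; omega
  -- H2
  have H2 : ∀ i j : Fin (2*n), i.val < j.val → (π j).val ≠ n-1 → (π j).val ≤ (π i).val := by
    intro i j hij hj
    by_contra hc
    push_neg at hc
    have hπj := (π j).isLt
    have hi0 : i.val ≠ 0 := by
      intro h
      have : i = z := Fin.ext (by omega)
      rw [this] at hc; omega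
    refine h312 ⟨z, i, j, ?_, ?_, ?_, ?_⟩
    · rw [Fin.lt_def]; omega
    · rw [Fin.lt_def]; omega
    · rw [Fin.lt_def]; omega
    · rw [Fin.lt_def]; omega
  -- identify p
  have hzab : z = a ∨ z = b := (hmem z).mp hz0
  rcases hzab with h | h
  · refine ⟨b, ?_, ?_, H2⟩
    · have : b ≠ z := fun hbz => hab ((h.symm.trans hbz.symm).symm).symm
      have : b.val ≠ z.val := fun hv => this (Fin.ext hv)
      omega
    · intro i
      rw [hmem i]
      constructor
      · rintro (rfl | rfl)
        · left; rw [← h, hzv]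
        · right; rfl
      · rintro (h1 | h1)
        · left; exact Fin.ext (by rw [h1, ← hzv, h])
        · right; exact Fin.ext h1
  · refine ⟨a, ?_, ?_, H2⟩
    · have : a ≠ z := fun haz => hab (haz.trans h)
      have : a.val ≠ z.val := fun hv => this (Fin.ext hv)
      omega
    · intro i
      rw [hmem i]
      constructor
      · rintro (rfl | rfl)
        · right; rfl
        · left; rw [← h, hzv]
      · rintro (h1 | h1)
        · right; exact Fin.ext (by rw [h1, ← hzv, h])
        · left; exact Fin.ext h1


lemma even_sum' {ι : Type*} (s : Finset ι) (f : ι → ℕ) (h : ∀ i ∈ s, Even (f i)) :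
    Even (∑ i ∈ s, f i) := by
  classical
  induction s using Finset.induction with
  | empty => simp
  | insert a s2 hx ih =>
    rw [Finset.sum_insert hx]
    exact Even.add (h a (by simp)) (ih fun i hi => h i (by simp [hi]))

lemma p_odd {n : ℕ} (hn : 0 < n) {π : Fin (2*n) → Fin n} {p : Fin (2*n)}
    (hM : IsMultisetPerm π) (hNC : NonCrossing π) (hp : 0 < p.val)
    (H1 : ∀ i : Fin (2*n), (π i).val = n-1 ↔ (i.val = 0 ∨ i.val = p.val)) :
    Odd p.val := by
  obtain ⟨z, hzv⟩ : ∃ z : Fin (2*n), z.val = 0 := ⟨⟨0, by omega⟩, rfl⟩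
  set A : Finset (Fin (2*n)) := Finset.univ.filter (fun j => 0 < j.val ∧ j.val < p.val)
    with hA
  have hcardA : A.card = p.val - 1 := by
    have : A = Finset.Ioo z p := by
      ext j
      simp only [hA, Finset.mem_filter, Finset.mem_univ, true_and, Finset.mem_Ioo]
      rw [Fin.lt_def, Fin.lt_def, hzv]
    rw [this, Fin.card_Ioo, hzv]
    omega
  have hsplit : A.card = ∑ v : Fin n, (A.filter fun j => π j = v).card :=
    Finset.card_eq_sum_card_fiberwise (fun x _ => Finset.mem_univ (π x))
  have heven : Even A.card := by
    rw [hsplit]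
    refine even_sum' _ _ ?_
    intro v _
    by_cases hv : v.val = n-1
    · have : (A.filter fun j => π j = v) = ∅ := by
        ext j
        simp only [Finset.mem_filter, Finset.notMem_empty, iff_false, hA,
          Finset.mem_univ, true_and, not_and]
        rintro ⟨hj1, hj2⟩ hj3
        have : (π j).val = n-1 := by rw [hj3]; exact hv
        have := (H1 j).mp this
        omega
      rw [this]; simp
    · obtain ⟨a, b, hab, hfib⟩ := Finset.card_eq_two.mp (hM v)
      have hmem : ∀ i : Fin (2*n), π i = v ↔ (i = a ∨ i = b) := by
        intro i
        have := Finset.ext_iff.mp hfib i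
        simpa using this
      have hπa : π a = v := (hmem a).mpr (Or.inl rfl)
      have hπb : π b = v := (hmem b).mpr (Or.inr rfl)
      have hπav : (π a).val ≠ n-1 := by rw [hπa]; exact hv
      have hπbv : (π b).val ≠ n-1 := by rw [hπb]; exact hv
      have hanz : a.val ≠ 0 ∧ a.val ≠ p.val := by
        have := (H1 a); omega
      have hbnz : b.val ≠ 0 ∧ b.val ≠ p.val := by
        have := (H1 b); omega
      -- claim: a ∈ A ↔ b ∈ A
      have hkey : ∀ c d : Fin (2*n), c.val < d.val → π c = v → π d = v →
          c ∈ A → d ∈ A := by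
        intro c d hcd hπc hπd hcA
        simp only [hA, Finset.mem_filter, Finset.mem_univ, true_and] at hcA ⊢
        have hdnz : d.val ≠ 0 ∧ d.val ≠ p.val := by
          have h1 : (π d).val ≠ n-1 := by rw [hπd]; exact hv
          have := (H1 d); omega
        refine ⟨by omega, ?_⟩
        by_contra hdp
        push_neg at hdp
        -- p.val < d.val : crossing (0, c, p, d)
        have e1 := (H1 z).mpr (Or.inl hzv)
        have e2 := (H1 p).mpr (Or.inr rfl)
        refine hNC ⟨z, c, p, d, ?_, ?_, ?_, ?_, ?_, ?_⟩
        · rw [Fin.lt_def]; omega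
        · rw [Fin.lt_def]; omega
        · rw [Fin.lt_def]; omega
        · rw [Fin.ext_iff]; omega
        · rw [hπc, hπd]
        · intro hcon
          rw [Fin.ext_iff, hπc] at hcon
          omega
      have hrev : ∀ c d : Fin (2*n), c.val < d.val → π c = v → π d = v →
          d ∈ A → c ∈ A := by
        intro c d hcd hπc hπd hdA
        simp only [hA, Finset.mem_filter, Finset.mem_univ, true_and] at hdA ⊢
        have hcnz : c.val ≠ 0 := by
          have h1 : (π c).val ≠ n-1 := by rw [hπc]; exact hv
          have := (H1 c); omega
        omega
      rcases hab.lt_or_gt with hlt | hlt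
      all_goals {
        first
        | (by_cases haA : a ∈ A
           · have hbA : b ∈ A := hkey a b hlt hπa hπb haA
             have : (A.filter fun j => π j = v) = {a, b} := by
               ext j
               simp only [Finset.mem_filter, Finset.mem_insert, Finset.mem_singleton]
               constructor
               · rintro ⟨_, hj⟩; exact (hmem j).mp hj
               · rintro (rfl | rfl)
                 exacts [⟨haA, hπa⟩, ⟨hbA, hπb⟩]
             rw [this, Finset.card_insert_of_notMem (by simpa using hab),
               Finset.card_singleton]
             exact ⟨1, rfl⟩
           · have hbA : b ∉ A := fun hbA => haA (hrev a b hlt hπa hπb hbA)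
             have : (A.filter fun j => π j = v) = ∅ := by
               ext j
               simp only [Finset.mem_filter, Finset.notMem_empty, iff_false, not_and]
               intro hjA hj
               rcases (hmem j).mp hj with rfl | rfl
               exacts [haA hjA, hbA hjA]
             rw [this]; simp)
        | (by_cases hbA : b ∈ A
           · have haA : a ∈ A := hkey b a hlt hπb hπa hbA
             have : (A.filter fun j => π j = v) = {a, b} := by
               ext j
               simp only [Finset.mem_filter, Finset.mem_insert, Finset.mem_singleton]
               constructor
               · rintro ⟨_, hj⟩; exact (hmem j).mp hj
               · rintro (rfl | rfl)
                 exacts [⟨haA, hπa⟩, ⟨hbA, hπb⟩]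
             rw [this, Finset.card_insert_of_notMem (by simpa using hab),
               Finset.card_singleton]
             exact ⟨1, rfl⟩
           · have haA : a ∉ A := fun haA => hbA (hrev b a hlt hπb hπa haA)
             have : (A.filter fun j => π j = v) = ∅ := by
               ext j
               simp only [Finset.mem_filter, Finset.notMem_empty, iff_false, not_and]
               intro hjA hj
               rcases (hmem j).mp hj with rfl | rfl
               exacts [haA hjA, hbA hjA]
             rw [this]; simp)
      }
  rw [hcardA] at heven
  rcases heven with ⟨m, hm⟩
  exact ⟨m, by omega⟩

theorem stmt17 (n : ℕ) (hn : 1 ≤ n) :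
    Nat.card {π : Fin (2*n) → Fin n //
      IsMultisetPerm π ∧ NonCrossing π ∧ Avoids122 π ∧ Avoids312 π} = n := by
  have hn0 : 0 < n := hn
  have props : ∀ t : Fin n, IsMultisetPerm (perm n hn0 t.val) ∧
      NonCrossing (perm n hn0 t.val) ∧ Avoids122 (perm n hn0 t.val) ∧
      Avoids312 (perm n hn0 t.val) := by
    intro t
    have H1 := perm_H1 hn0 t.isLt
    have H2 := perm_H2 hn0 t.isLt
    have H3 := perm_H3 hn0 t.isLt
    exact ⟨perm_mult hn0 t.isLt, nc_of H1 H3, a122_of H1 H2, a312_of H2⟩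
  let F : Fin n → {π : Fin (2*n) → Fin n //
      IsMultisetPerm π ∧ NonCrossing π ∧ Avoids122 π ∧ Avoids312 π} :=
    fun t => ⟨perm n hn0 t.val, props t⟩
  have hbij : Function.Bijective F := by
    constructor
    · intro s t hst
      have h : perm n hn0 s.val = perm n hn0 t.val := congrArg Subtype.val hst
      have hs := s.isLt
      have hi : 2*s.val+1 < 2*n := by omega
      have e1 : (perm n hn0 s.val ⟨2*s.val+1, hi⟩).val = n-1 :=
        (perm_H1 hn0 s.isLt _).mpr (Or.inr rfl)
      rw [h] at e1
      have e2 := (perm_H1 hn0 t.isLt _).mp e1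
      simp only at e2
      exact Fin.ext (by omega)
    · rintro ⟨π, hM, hNC, h122, h312⟩
      obtain ⟨p, hp, H1, H2⟩ := structure_of hn0 hM hNC h122 h312
      obtain ⟨t, ht⟩ := p_odd hn0 hM hNC hp H1
      have htn : t < n := by have := p.isLt; omega
      refine ⟨⟨t, htn⟩, ?_⟩
      apply Subtype.ext
      have H1p : ∀ i : Fin (2*n), (perm n hn0 t i).val = n-1 ↔
          (i.val = 0 ∨ i.val = p.val) := by
        intro i
        rw [ht]
        exact perm_H1 hn0 htn i
      exact unique_struct (perm_mult hn0 htn) hM H1p H1 (perm_H2 hn0 htn) H2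
  rw [← Nat.card_eq_of_bijective F hbij, Nat.card_eq_fintype_card, Fintype.card_fin]
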